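/- arXiv:1201.0969 — 3 statements merged into one kernel-verified Lean document; each statement's English description precedes it below -/
import Mathlib

section
/- Define Γ(u,v) := −(u·g⁻¹v + v·g⁻¹u)/2 for symmetric n×n matrices u, v (with g symmetric invertible, all constant). Then for constant symmetric matrices u, v, w, the curvature expression R(u,v)w := D_u(Γ(v,w)) − D_v(Γ(u,w)) + Γ(u, Γ(v,w)) − Γ(v, Γ(u,w)), where D_u denotes the directional derivative of the g-dependent expression Γ in the direction u at the point g, equals −(1/4)·g·[[g⁻¹u, g⁻¹v], g⁻¹w], where [·,·] is the matrix commutator. -/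
open Matrix

/-- Pointwise curvature formula for the L² metric on the space of metrics:
with `Γ(u,v) = -(u g⁻¹ v + v g⁻¹ u)/2` and the directional derivatives
`D_u Γ(v,w) = (v g⁻¹ u g⁻¹ w + w g⁻¹ u g⁻¹ v)/2`, one has
`D_uΓ(v,w) − D_vΓ(u,w) + Γ(u,Γ(v,w)) − Γ(v,Γ(u,w)) = -(1/4) g [[g⁻¹u, g⁻¹v], g⁻¹w]`. -/
theorem stmt_9 {n : ℕ} (g u v w : Matrix (Fin n) (Fin n) ℝ)
    (hginv : IsUnit g.det) (hg : g.IsSymm) (hu : u.IsSymm) (hv : v.IsSymm) (hw : w.IsSymm)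
    (Γ : Matrix (Fin n) (Fin n) ℝ → Matrix (Fin n) (Fin n) ℝ → Matrix (Fin n) (Fin n) ℝ)
    (hΓ : ∀ a b, Γ a b = -((1 / 2 : ℝ) • (a * g⁻¹ * b + b * g⁻¹ * a))) :
    (1 / 2 : ℝ) • (v * g⁻¹ * u * g⁻¹ * w + w * g⁻¹ * u * g⁻¹ * v)
      - (1 / 2 : ℝ) • (u * g⁻¹ * v * g⁻¹ * w + w * g⁻¹ * v * g⁻¹ * u)
      + Γ u (Γ v w) - Γ v (Γ u w)
      = -((1 / 4 : ℝ) • (g *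
          (((g⁻¹ * u) * (g⁻¹ * v) - (g⁻¹ * v) * (g⁻¹ * u)) * (g⁻¹ * w)
            - (g⁻¹ * w) * ((g⁻¹ * u) * (g⁻¹ * v) - (g⁻¹ * v) * (g⁻¹ * u))))) := by
  have hk : g * g⁻¹ = 1 := Matrix.mul_nonsing_inv g hginv
  simp only [hΓ, smul_add, smul_smul, neg_smul, smul_neg, neg_neg, Matrix.smul_mul,
    Matrix.mul_smul, Matrix.mul_add, Matrix.add_mul, Matrix.mul_sub, Matrix.sub_mul,
    Matrix.mul_neg, Matrix.neg_mul, ← Matrix.mul_assoc, hk, Matrix.one_mul]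
  module
end

section
/- Let S_t be a continuous family of n×n real matrices and let J_t be a C¹ family of matrices satisfying the ODE 2·J̇_t = J_t S_t − S_t J_t with J₀² = −I. Then J_t² = −I for all t. -/
open Matrix
attribute [local instance] Matrix.normedAddCommGroup Matrix.normedSpace

-- sup-norm product bound
lemma aux_norm_mul {n : ℕ} (A B : Matrix (Fin n) (Fin n) ℝ) :
    ‖A * B‖ ≤ n * ‖A‖ * ‖B‖ := by
  rw [Matrix.norm_le_iff (by positivity)]
  intro i j
  rw [Matrix.mul_apply]
  calc ‖∑ k, A i k * B k j‖ ≤ ∑ k : Fin n, ‖A i k * B k j‖ := norm_sum_le _ _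
    _ ≤ ∑ _k : Fin n, ‖A‖ * ‖B‖ := by
        refine Finset.sum_le_sum fun k _ => ?_
        rw [norm_mul]
        exact mul_le_mul (norm_entry_le_entrywise_sup_norm A)
          (norm_entry_le_entrywise_sup_norm B) (norm_nonneg _) (norm_nonneg _)
    _ = n * ‖A‖ * ‖B‖ := by simp [mul_assoc]

-- entrywise derivative of matrix-valued function
lemma aux_hasDerivAt_entry {n : ℕ} {J J' : ℝ → Matrix (Fin n) (Fin n) ℝ} {t : ℝ}
    (h : HasDerivAt J (J' t) t) (i k : Fin n) :
    HasDerivAt (fun u => J u i k) (J' t i k) t := by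
  have h1 := (hasDerivAt_pi.mp h) i
  exact (hasDerivAt_pi.mp h1) k

lemma aux_hasDerivAt_sq {n : ℕ} {J J' : ℝ → Matrix (Fin n) (Fin n) ℝ} {t : ℝ}
    (h : HasDerivAt J (J' t) t) :
    HasDerivAt (fun u => J u * J u) (J' t * J t + J t * J' t) t := by
  refine hasDerivAt_pi.mpr ?_
  intro i
  refine hasDerivAt_pi.mpr ?_
  intro j
  have : HasDerivAt (fun u => ∑ k, J u i k * J u k j)
      (∑ k, (J' t i k * J t k j + J t i k * J' t k j)) t :=
    HasDerivAt.fun_sum fun k _ => (aux_hasDerivAt_entry h i k).mul (aux_hasDerivAt_entry h k j)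
  convert this using 1
  · rfl
  · rfl
  · simp [Matrix.mul_apply, Matrix.add_apply, Finset.sum_add_distrib]
  · simp [Matrix.mul_apply, Matrix.add_apply, Finset.sum_add_distrib]

set_option maxHeartbeats 1000000 in
/-- If `2 J̇ = J S − S J` with `S` continuous and `J₀² = −I`, then `J_t² = −I` for all `t`. -/
theorem stmt_10 {n : ℕ} (S J J' : ℝ → Matrix (Fin n) (Fin n) ℝ)
    (hS : Continuous S) (hJ : ∀ t, HasDerivAt J (J' t) t)
    (hode : ∀ t, (2 : ℝ) • J' t = J t * S t - S t * J t)
    (h0 : J 0 * J 0 = -1) : ∀ t, J t * J t = -1 := by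
  intro t₁
  set a : ℝ := -(|t₁| + 1) with ha
  set b : ℝ := |t₁| + 1 with hb
  have hb0 : (0:ℝ) < b := by positivity
  have hab : a < b := by simp only [ha]; linarith
  -- bound on S over [a,b]
  obtain ⟨C, hC⟩ : ∃ C, ∀ u ∈ Set.Icc a b, ‖S u‖ ≤ C :=
    isCompact_Icc.exists_bound_of_continuousOn hS.continuousOn
  set C' : ℝ := max C 0 with hC'
  have hC'0 : 0 ≤ C' := le_max_right _ _
  have hCb : ∀ u ∈ Set.Icc a b, ‖S u‖ ≤ C' := fun u hu => (hC u hu).trans (le_max_left _ _)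
  -- clamped S
  set A : ℝ → Matrix (Fin n) (Fin n) ℝ := fun u => S (max a (min u b)) with hA
  have hclamp : ∀ u, max a (min u b) ∈ Set.Icc a b := fun u =>
    ⟨le_max_left _ _, max_le (le_of_lt hab) (min_le_right _ _)⟩
  have hAeq : ∀ u ∈ Set.Ioo a b, A u = S u := by
    intro u hu
    simp [hA, max_eq_right, min_eq_left, le_of_lt hu.2, le_of_lt hu.1,
      min_eq_left (le_of_lt hu.2)]
  have hAb : ∀ u, ‖A u‖ ≤ C' := fun u => hCb _ (hclamp u)
  -- the vector field
  set v : ℝ → Matrix (Fin n) (Fin n) ℝ → Matrix (Fin n) (Fin n) ℝ :=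
    fun u X => (2:ℝ)⁻¹ • (X * A u - A u * X) with hv
  set K : NNReal := (n * C').toNNReal with hK
  have hKv : (K : ℝ) = n * C' := Real.coe_toNNReal _ (by positivity)
  have hlip : ∀ u, LipschitzWith K (v u) := by
    intro u
    refine LipschitzWith.of_dist_le_mul fun X Y => ?_
    rw [dist_eq_norm, dist_eq_norm]
    have : v u X - v u Y = (2:ℝ)⁻¹ • ((X - Y) * A u - A u * (X - Y)) := by
      simp only [hv]
      rw [← smul_sub]
      congr 1
      noncomm_ring
    rw [this, norm_smul]
    have h1 : ‖(X - Y) * A u - A u * (X - Y)‖ ≤ 2 * ((n * C') * ‖X - Y‖) := by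
      calc ‖(X - Y) * A u - A u * (X - Y)‖
          ≤ ‖(X - Y) * A u‖ + ‖A u * (X - Y)‖ := norm_sub_le _ _
        _ ≤ n * ‖X - Y‖ * ‖A u‖ + n * ‖A u‖ * ‖X - Y‖ :=
            add_le_add (aux_norm_mul _ _) (aux_norm_mul _ _)
        _ ≤ 2 * ((n * C') * ‖X - Y‖) := by
            have := hAb u
            have h2 : n * ‖X - Y‖ * ‖A u‖ ≤ n * C' * ‖X - Y‖ := by
              rw [mul_comm (n * ‖X-Y‖) ‖A u‖, ← mul_assoc, mul_comm ‖A u‖ (n:ℝ)]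
              apply mul_le_mul_of_nonneg_right _ (norm_nonneg _)
              exact mul_le_mul_of_nonneg_left this (Nat.cast_nonneg n)
            have h3 : n * ‖A u‖ * ‖X - Y‖ ≤ n * C' * ‖X - Y‖ := by
              apply mul_le_mul_of_nonneg_right _ (norm_nonneg _)
              exact mul_le_mul_of_nonneg_left this (Nat.cast_nonneg n)
            linarith
    calc ‖(2:ℝ)⁻¹‖ * ‖(X - Y) * A u - A u * (X - Y)‖
        ≤ (2:ℝ)⁻¹ * (2 * ((n * C') * ‖X - Y‖)) := by
          rw [norm_inv, Real.norm_ofNat]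
          exact mul_le_mul_of_nonneg_left h1 (by norm_num)
      _ = K * ‖X - Y‖ := by rw [hKv]; ring
  -- f and g
  set f : ℝ → Matrix (Fin n) (Fin n) ℝ := fun u => J u * J u with hf
  set g : ℝ → Matrix (Fin n) (Fin n) ℝ := fun _ => (-1 : Matrix (Fin n) (Fin n) ℝ) with hg
  have hf' : ∀ u ∈ Set.Ioo a b, HasDerivAt f (v u (f u)) u := by
    intro u hu
    have hd := aux_hasDerivAt_sq (hJ u)
    have key : J' u * J u + J u * J' u = v u (f u) := by
      have h2 : (2:ℝ) • (J' u * J u + J u * J' u) = (2:ℝ) • v u (f u) := by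
        have hl : (2:ℝ) • (J' u * J u + J u * J' u)
            = ((2:ℝ) • J' u) * J u + J u * ((2:ℝ) • J' u) := by
          rw [smul_add, smul_mul_assoc, mul_smul_comm]
        rw [hl, hode u]
        have hr : (2:ℝ) • v u (f u) = f u * A u - A u * f u := by
          simp only [hv, smul_smul]
          norm_num
        rw [hr, hAeq u hu, hf]
        noncomm_ring
      have := smul_right_injective (Matrix (Fin n) (Fin n) ℝ) (two_ne_zero (α := ℝ)) h2
      exact this
    rw [← key]; exact hd
  have hg' : ∀ u ∈ Set.Ioo a b, HasDerivAt g (v u (g u)) u := by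
    intro u hu
    have : v u (g u) = 0 := by simp [hv, hg]
    rw [this]
    exact hasDerivAt_const u _
  have h0' : (0:ℝ) ∈ Set.Ioo a b := by constructor <;> simp only [ha, hb] <;> linarith
  have heq : Set.EqOn f g (Set.Icc a b) :=
    ODE_solution_unique_of_mem_Icc (s := fun _ => Set.univ)
      (fun u _ => (hlip u).lipschitzOnWith) h0'
      (fun u _ => (aux_hasDerivAt_sq (hJ u)).continuousAt.continuousWithinAt)
      hf' (fun _ _ => Set.mem_univ _)
      continuousOn_const hg' (fun _ _ => Set.mem_univ _) (by simpa [hf, hg] using h0)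
  have ht₁ : t₁ ∈ Set.Icc a b := by
    constructor <;> simp only [ha, hb] <;> [linarith [neg_abs_le t₁]; linarith [le_abs_self t₁]]
  exact heq ht₁
end

section
/- For symmetric n×n real matrices u, v and symmetric invertible g, the sectional curvature expression σ(u,v) := −(1/4)·Tr{[[U,V],V]·U}, where U := g⁻¹u and V := g⁻¹v, satisfies σ(u,v) = −(1/4)·Tr([U,V]·[U,V]^{T_g}) ≤ 0, where A^{T_g} := g⁻¹Aᵀg denotes the g-transpose. In particular σ(u,v) = 0 if and only if U and V commute. -/
open Matrix
open scoped MatrixOrder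

section aux

variable {n : ℕ}

private lemma trace_mul_transpose_nonneg' (D : Matrix (Fin n) (Fin n) ℝ) :
    0 ≤ Matrix.trace (D * Dᵀ) := by
  rw [Matrix.trace]
  apply Finset.sum_nonneg
  intro i _
  simp only [Matrix.diag_apply, Matrix.mul_apply, Matrix.transpose_apply]
  exact Finset.sum_nonneg fun j _ => mul_self_nonneg _

private lemma trace_mul_transpose_eq_zero_iff' (D : Matrix (Fin n) (Fin n) ℝ) :
    Matrix.trace (D * Dᵀ) = 0 ↔ D = 0 := by
  constructor
  · intro h
    ext i j
    have h' : ∑ i, ∑ j, D i j * D i j = 0 := by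
      simpa [Matrix.trace, Matrix.diag_apply, Matrix.mul_apply] using h
    have hnn : ∀ i ∈ Finset.univ, (0:ℝ) ≤ ∑ j, D i j * D i j :=
      fun i _ => Finset.sum_nonneg fun j _ => mul_self_nonneg _
    have h1 := (Finset.sum_eq_zero_iff_of_nonneg hnn).mp h' i (Finset.mem_univ i)
    have h2 := (Finset.sum_eq_zero_iff_of_nonneg
      (fun j _ => mul_self_nonneg (D i j))).mp h1 j (Finset.mem_univ j)
    simpa [mul_self_eq_zero] using h2
  · intro h; simp [h]

end aux

/-- Non-positivity of the sectional curvature of the L² metric: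
for `U := g⁻¹u`, `V := g⁻¹v` with `g` positive definite and `u`, `v` symmetric,
`σ(u,v) = −(1/4)Tr([[U,V],V]U) = −(1/4)Tr([U,V]·[U,V]^{T_g}) ≤ 0`, with equality
iff `U` and `V` commute. -/
theorem stmt_19 {n : ℕ} (g u v : Matrix (Fin n) (Fin n) ℝ) (hg : g.PosDef)
    (hu : u.IsSymm) (hv : v.IsSymm)
    (U V : Matrix (Fin n) (Fin n) ℝ) (hU : U = g⁻¹ * u) (hV : V = g⁻¹ * v) :
    (-(1 / 4 : ℝ)) * Matrix.trace (((U * V - V * U) * V - V * (U * V - V * U)) * U)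
        = (-(1 / 4 : ℝ)) * Matrix.trace ((U * V - V * U) * (g⁻¹ * (U * V - V * U)ᵀ * g)) ∧
    (-(1 / 4 : ℝ)) * Matrix.trace (((U * V - V * U) * V - V * (U * V - V * U)) * U) ≤ 0 ∧
    ((-(1 / 4 : ℝ)) * Matrix.trace (((U * V - V * U) * V - V * (U * V - V * U)) * U) = 0
      ↔ U * V = V * U) := by
  set C := U * V - V * U with hC
  -- basic facts about g
  have hgdet : IsUnit g.det := isUnit_iff_ne_zero.mpr hg.det_pos.ne'
  have hginv : g⁻¹ * g = 1 := Matrix.nonsing_inv_mul g hgdet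
  have hgT : gᵀ = g := by simpa using hg.isHermitian.eq
  have hgiT : (g⁻¹)ᵀ = g⁻¹ := by rw [Matrix.transpose_nonsing_inv, hgT]
  -- transpose of U, V
  have hUT : Uᵀ = u * g⁻¹ := by rw [hU, Matrix.transpose_mul, hgiT, hu.eq]
  have hVT : Vᵀ = v * g⁻¹ := by rw [hV, Matrix.transpose_mul, hgiT, hv.eq]
  -- g-transpose of C is -C
  have hCT : g⁻¹ * Cᵀ * g = -C := by
    rw [hC, Matrix.transpose_sub, Matrix.transpose_mul, Matrix.transpose_mul, hUT, hVT,
      hU, hV]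
    have : ∀ A B : Matrix (Fin n) (Fin n) ℝ,
        g⁻¹ * (A * g⁻¹ * (B * g⁻¹)) * g = g⁻¹ * A * (g⁻¹ * B) * (g⁻¹ * g) := by
      intro A B; noncomm_ring
    rw [Matrix.mul_sub, Matrix.sub_mul, this, this, hginv, mul_one, mul_one]
    noncomm_ring
  -- first trace identity : both traces equal -Tr(C*C)
  have ht1 : Matrix.trace ((C * V - V * C) * U) = -Matrix.trace (C * C) := by
    rw [Matrix.sub_mul, Matrix.trace_sub, mul_assoc, mul_assoc,
      Matrix.trace_mul_comm V (C * U), mul_assoc]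
    rw [show Matrix.trace (C * (V * U)) - Matrix.trace (C * (U * V))
        = Matrix.trace (C * (V * U - U * V)) by rw [Matrix.mul_sub, Matrix.trace_sub]]
    rw [show V * U - U * V = -C by rw [hC]; noncomm_ring]
    simp
  have ht2 : Matrix.trace (C * (g⁻¹ * Cᵀ * g)) = -Matrix.trace (C * C) := by
    rw [hCT]; simp
  -- square root of g
  have hgps := hg.posSemidef
  set S := CFC.sqrt g with hSdef
  have hSS : S * S = g := CFC.sqrt_mul_sqrt_self g hgps.nonneg
  have hST : Sᵀ = S := by simpa using (CFC.sqrt_nonneg g).posSemidef.isHermitian.eq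
  have hSdet : IsUnit S.det := by
    refine isUnit_iff_ne_zero.mpr fun h => hg.det_pos.ne' ?_
    rw [← hSS, Matrix.det_mul, h, mul_zero]
  have hSiS : S⁻¹ * S = 1 := Matrix.nonsing_inv_mul S hSdet
  have hSSi : S * S⁻¹ = 1 := Matrix.mul_nonsing_inv S hSdet
  have hSiT : (S⁻¹)ᵀ = S⁻¹ := by rw [Matrix.transpose_nonsing_inv, hST]
  have hgg : g * g⁻¹ = 1 := Matrix.mul_nonsing_inv g hgdet
  have hginv2 : g⁻¹ = S⁻¹ * S⁻¹ := by rw [← hSS, Matrix.mul_inv_rev]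
  set D := S * C * S⁻¹ with hD
  -- D is antisymmetric
  have hCt : Cᵀ = g * -C * g⁻¹ := by
    have h1 : g * (g⁻¹ * Cᵀ * g) * g⁻¹ = g * -C * g⁻¹ := by rw [hCT]
    rw [show g * (g⁻¹ * Cᵀ * g) * g⁻¹ = (g * g⁻¹) * Cᵀ * (g * g⁻¹) by noncomm_ring] at h1
    rw [hgg] at h1
    simpa using h1
  have hDT : Dᵀ = -D := by
    rw [hD, Matrix.transpose_mul, Matrix.transpose_mul, hSiT, hST, hCt, hginv2, ← hSS]
    calc S⁻¹ * (S * S * -C * (S⁻¹ * S⁻¹) * S)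
        = -((S⁻¹ * S) * (S * C) * (S⁻¹ * (S⁻¹ * S))) := by noncomm_ring
      _ = -(S * C * S⁻¹) := by rw [hSiS, one_mul, mul_one]
  -- trace (C*C) = -trace (D*Dᵀ)
  have hDD : D * D = S * (C * C) * S⁻¹ := by
    rw [hD, show S * C * S⁻¹ * (S * C * S⁻¹) = S * C * (S⁻¹ * S) * C * S⁻¹ by noncomm_ring,
      hSiS, mul_one, mul_assoc S C C]
  have hCiD : S⁻¹ * D * S = C := by
    rw [hD, show S⁻¹ * (S * C * S⁻¹) * S = (S⁻¹ * S) * C * (S⁻¹ * S) by noncomm_ring,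
      hSiS, one_mul, mul_one]
  have hmain : Matrix.trace (C * C) = -Matrix.trace (D * Dᵀ) := by
    have h1 : Matrix.trace (D * D) = Matrix.trace (C * C) := by
      rw [hDD, mul_assoc, Matrix.trace_mul_comm, mul_assoc, hSiS, mul_one]
    rw [← h1, hDT, mul_neg, Matrix.trace_neg, neg_neg]
  refine ⟨by rw [ht1, ht2], ?_, ?_⟩
  · rw [ht1, hmain]
    have := trace_mul_transpose_nonneg' D
    linarith
  · rw [ht1, hmain]
    constructor
    · intro h
      have htr : Matrix.trace (D * Dᵀ) = 0 := by linarith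
      have hD0 : D = 0 := (trace_mul_transpose_eq_zero_iff' D).mp htr
      have hC0 : C = 0 := by rw [← hCiD, hD0, Matrix.mul_zero, Matrix.zero_mul]
      rw [hC] at hC0
      exact sub_eq_zero.mp hC0
    · intro h
      have hC0 : C = 0 := by rw [hC, h, sub_self]
      have hD0 : D = 0 := by rw [hD, hC0, Matrix.mul_zero, Matrix.zero_mul]
      rw [hD0]
      simp
end
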